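/- There exists a quantum channel Φ on two qubits achieving ⟨vv*, (Φ⊗id)(uu*)⟩ = cos²(π/8), where u = (|00⟩+|11⟩)/√2 and v = cos(π/8)|00⟩ + sin(π/8)|11⟩; i.e., the bound cos²(π/8) is attained. -/

import Mathlib

open Matrix
open scoped Kronecker ComplexOrder

noncomputable section

/-- `Φ ⊗ id` : apply a linear map `Φ` on `L(X)` to the first tensor factor of `L(X ⊗ Z)`. -/
def lmapTensorId {n m k : Type*} [Fintype n] [Fintype k]
    (Φ : Matrix n n ℂ →ₗ[ℂ] Matrix m m ℂ)
    (M : Matrix (n × k) (n × k) ℂ) : Matrix (m × k) (m × k) ℂ :=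
  fun p q => Φ (fun i j => M (i, p.2) (j, q.2)) p.1 q.1

/-- `id ⊗ Ψ` : apply a linear map `Ψ` on `L(Z)` to the second tensor factor of `L(Y ⊗ Z)`. -/
def idTensorLmap {n k l : Type*} [Fintype n] [Fintype k]
    (Ψ : Matrix k k ℂ →ₗ[ℂ] Matrix l l ℂ)
    (M : Matrix (n × k) (n × k) ℂ) : Matrix (n × l) (n × l) ℂ :=
  fun p q => Ψ (fun a b => M (p.1, a) (q.1, b)) p.2 q.2

/-- Complete positivity: `Φ ⊗ id_k` maps positive semidefinite operators to positive
semidefinite operators for every finite-dimensional ancilla `k`. -/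
def IsCompletelyPositive {n m : Type*} [Fintype n] [Fintype m]
    (Φ : Matrix n n ℂ →ₗ[ℂ] Matrix m m ℂ) : Prop :=
  ∀ (k : Type) [Fintype k] [DecidableEq k],
    ∀ M : Matrix (n × k) (n × k) ℂ, M.PosSemidef → (lmapTensorId Φ M).PosSemidef

def IsTracePreserving {n m : Type*} [Fintype n] [Fintype m]
    (Φ : Matrix n n ℂ →ₗ[ℂ] Matrix m m ℂ) : Prop :=
  ∀ M : Matrix n n ℂ, (Φ M).trace = M.trace

/-- Partial trace over the first tensor factor. -/
def trFst {n k : Type*} [Fintype n] (M : Matrix (n × k) (n × k) ℂ) : Matrix k k ℂ :=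
  fun a b => ∑ i : n, M (i, a) (i, b)

/-- Partial trace over the second tensor factor. -/
def trSnd {n k : Type*} [Fintype k] (M : Matrix (n × k) (n × k) ℂ) : Matrix n n ℂ :=
  fun i j => ∑ a : k, M (i, a) (j, a)

/-- Hilbert-Schmidt inner product `⟨A, B⟩ = Tr(A* B)`. -/
def minner {n : Type*} [Fintype n] (A B : Matrix n n ℂ) : ℂ := (Aᴴ * B).trace

/-- `Matrix.PosSemidef.sqrt` as defined in the older Mathlib (removed since). -/
def posSemidefSqrt {n : Type*} [Fintype n] [DecidableEq n] {M : Matrix n n ℂ}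
    (hA : M.PosSemidef) : Matrix n n ℂ :=
  hA.1.eigenvectorUnitary.1 * diagonal ((↑) ∘ (√·) ∘ hA.1.eigenvalues) *
    (star hA.1.eigenvectorUnitary : Matrix n n ℂ)

open Classical in
/-- Square root of a positive semidefinite matrix (junk value `0` otherwise). -/
def msqrt {n : Type*} [Fintype n] [DecidableEq n] (M : Matrix n n ℂ) : Matrix n n ℂ :=
  if h : M.PosSemidef then posSemidefSqrt h else 0

/-- Trace norm `‖M‖₁ = Tr √(M* M)`. -/
def traceNorm {n : Type*} [Fintype n] [DecidableEq n] (M : Matrix n n ℂ) : ℝ :=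
  ((posSemidefSqrt (Matrix.posSemidef_conjTranspose_mul_self M)).trace).re

/-- Fidelity `F(Q, R) = ‖√Q √R‖₁` of positive semidefinite matrices. -/
def fid {n : Type*} [Fintype n] [DecidableEq n] (Q R : Matrix n n ℂ) : ℝ :=
  traceNorm (msqrt Q * msqrt R)

/-- Choi-Jamiolkowski operator `J(Φ) = Σ_{i,j} Φ(|i⟩⟨j|) ⊗ |i⟩⟨j|`. -/
def choi {n m : Type*} [Fintype n] [DecidableEq n] [Fintype m]
    (Φ : Matrix n n ℂ →ₗ[ℂ] Matrix m m ℂ) : Matrix (m × n) (m × n) ℂ :=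
  fun p q => Φ (Matrix.single p.2 q.2 1) p.1 q.1

/-- Tensor product of vectors. -/
def tensorVec {α β : Type*} (v : α → ℂ) (w : β → ℂ) : α × β → ℂ := fun p => v p.1 * w p.2

/-- `u = (|00⟩ + |11⟩)/√2`. -/
def uVec : Fin 2 × Fin 2 → ℂ := fun p =>
  if p = (0, 0) then (Real.sqrt 2 : ℂ)⁻¹ else if p = (1, 1) then (Real.sqrt 2 : ℂ)⁻¹ else 0

/-- `v = cos(π/8)|00⟩ + sin(π/8)|11⟩`. -/
def vVec : Fin 2 × Fin 2 → ℂ := fun p =>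
  if p = (0, 0) then (Real.cos (Real.pi / 8) : ℂ)
  else if p = (1, 1) then (Real.sin (Real.pi / 8) : ℂ) else 0

/-- `w = -sin(π/8)|00⟩ + cos(π/8)|11⟩`. -/
def wVec : Fin 2 × Fin 2 → ℂ := fun p =>
  if p = (0, 0) then -(Real.sin (Real.pi / 8) : ℂ)
  else if p = (1, 1) then (Real.cos (Real.pi / 8) : ℂ) else 0


/-- There is a quantum channel on the first qubit attaining
`⟨vv*, (Φ ⊗ id)(uu*)⟩ = cos²(π/8)`. -/
theorem stmt1 :
    ∃ Φ : Matrix (Fin 2) (Fin 2) ℂ →ₗ[ℂ] Matrix (Fin 2) (Fin 2) ℂ,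
      IsCompletelyPositive Φ ∧ IsTracePreserving Φ ∧
      minner (vecMulVec vVec (star vVec)) (lmapTensorId Φ (vecMulVec uVec (star uVec))) =
        ((Real.cos (Real.pi / 8) ^ 2 : ℝ) : ℂ) := by
  refine ⟨LinearMap.id, ?_, ?_, ?_⟩
  · intro k _ _ M hM
    have : lmapTensorId (LinearMap.id : Matrix (Fin 2) (Fin 2) ℂ →ₗ[ℂ] _) M = M := rfl
    rw [this]; exact hM
  · intro M; rfl
  · have hid : lmapTensorId (LinearMap.id : Matrix (Fin 2) (Fin 2) ℂ →ₗ[ℂ] _)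
        (vecMulVec uVec (star uVec)) = vecMulVec uVec (star uVec) := rfl
    rw [hid]
    have h2 : Real.sqrt 2 * Real.sqrt 2 = 2 := Real.mul_self_sqrt (by norm_num)
    have h2n : (0:ℝ) ≤ Real.sqrt 2 := Real.sqrt_nonneg 2
    have ha2 : Real.sqrt (2 + Real.sqrt 2) ^ 2 = 2 + Real.sqrt 2 :=
      Real.sq_sqrt (by positivity)
    have hb2 : Real.sqrt (2 - Real.sqrt 2) ^ 2 = 2 - Real.sqrt 2 :=
      Real.sq_sqrt (by nlinarith)
    have hab : Real.sqrt (2 + Real.sqrt 2) * Real.sqrt (2 - Real.sqrt 2) = Real.sqrt 2 := by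
      rw [← Real.sqrt_mul (by positivity)]
      congr 1; nlinarith
    simp only [minner, Matrix.trace, Matrix.diag, Matrix.mul_apply,
      Matrix.conjTranspose_apply, Matrix.vecMulVec_apply, Fintype.sum_prod_type,
      Fin.sum_univ_two, uVec, vVec, Pi.star_apply, RCLike.star_def, map_inv₀,
      Complex.conj_ofReal, Real.cos_pi_div_eight, Real.sin_pi_div_eight]
    norm_num [Prod.ext_iff, ← Complex.ofReal_inv]
    norm_cast
    field_simp
    ring_nf
    rw [show (starRingEnd ℂ) 2 = 2 from map_ofNat _ 2]
    have key : Real.sqrt (2 + Real.sqrt 2) * Real.sqrt (2 - Real.sqrt 2) * 8 +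
        Real.sqrt (2 + Real.sqrt 2) ^ 2 * 4 + Real.sqrt (2 - Real.sqrt 2) ^ 2 * 4 =
        Real.sqrt 2 * 2 * 4 + 2 * 8 := by nlinarith [ha2, hb2, hab, h2]
    have keyC := congrArg (Complex.ofReal) key
    push_cast at keyC
    have hc : (((Real.sqrt 2)⁻¹ ^ 2 : ℝ) : ℂ) = 1 / 2 := by
      rw [inv_pow, Real.sq_sqrt (by norm_num : (0:ℝ) ≤ 2)]; push_cast; norm_num
    have habC : ((Real.sqrt (2 + Real.sqrt 2) : ℝ) : ℂ) * ((Real.sqrt (2 - Real.sqrt 2) : ℝ) : ℂ)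
        = ((Real.sqrt 2 : ℝ) : ℂ) := by exact_mod_cast hab
    have ha2C : ((Real.sqrt (2 + Real.sqrt 2) : ℝ) : ℂ) ^ 2 = 2 + ((Real.sqrt 2 : ℝ) : ℂ) := by
      exact_mod_cast ha2
    have hb2C : ((Real.sqrt (2 - Real.sqrt 2) : ℝ) : ℂ) ^ 2 = 2 - ((Real.sqrt 2 : ℝ) : ℂ) := by
      exact_mod_cast hb2
    linear_combination (4 * ((Real.sqrt (2 + Real.sqrt 2) : ℝ) : ℂ) *
        ((Real.sqrt (2 - Real.sqrt 2) : ℝ) : ℂ) + 2 * ((Real.sqrt (2 + Real.sqrt 2) : ℝ) : ℂ) ^ 2 +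
        2 * ((Real.sqrt (2 - Real.sqrt 2) : ℝ) : ℂ) ^ 2) * hc - 6 * habC - 5 * ha2C - 3 * hb2C + keyC

end
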